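/- Define h_s, h_c : ℝ → ℝ by h_s(y) := √y·sin(log y) and h_c(y) := √y·cos(log y) for y > 0, and h_s(y) := h_c(y) := 0 for y ≤ 0. Then h_s and h_c are infinitely differentiable on (0,∞), and for every nonnegative integer ν the functions y ↦ y^{ν−1/2}·h_s^{(ν)}(y) and y ↦ y^{ν−1/2}·h_c^{(ν)}(y) remain bounded as y ↓ 0; in particular they are bounded on (0,1]. -/

import Mathlib

open Filter Topology

/-- `h_s(y) = √y · sin(log y)` for `y > 0`, and `0` for `y ≤ 0`. -/
noncomputable def hS (y : ℝ) : ℝ :=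
  if 0 < y then Real.sqrt y * Real.sin (Real.log y) else 0

/-- `h_c(y) = √y · cos(log y)` for `y > 0`, and `0` for `y ≤ 0`. -/
noncomputable def hC (y : ℝ) : ℝ :=
  if 0 < y then Real.sqrt y * Real.cos (Real.log y) else 0

lemma key (p a b : ℝ) {y : ℝ} (hy : 0 < y) :
    HasDerivAt (fun y : ℝ => y ^ p * (a * Real.sin (Real.log y) + b * Real.cos (Real.log y)))
      (y ^ (p-1) * ((p*a - b) * Real.sin (Real.log y) + (a + p*b) * Real.cos (Real.log y))) y := by
  have h1 : HasDerivAt (fun y : ℝ => y ^ p) (p * y ^ (p-1)) y :=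
    Real.hasDerivAt_rpow_const (Or.inl hy.ne')
  have hlog := Real.hasDerivAt_log hy.ne'
  have hsin : HasDerivAt (fun y : ℝ => Real.sin (Real.log y)) (Real.cos (Real.log y) * y⁻¹) y :=
    (Real.hasDerivAt_sin _).comp y hlog
  have hcos : HasDerivAt (fun y : ℝ => Real.cos (Real.log y)) (-Real.sin (Real.log y) * y⁻¹) y :=
    (Real.hasDerivAt_cos _).comp y hlog
  have h := h1.mul ((hsin.const_mul a).add (hcos.const_mul b))
  refine h.congr_deriv ?_
  have hy0 : y ≠ 0 := hy.ne'
  have hyp : y ^ (p-1) = y ^ p / y := by rw [Real.rpow_sub hy, Real.rpow_one]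
  rw [hyp, Pi.add_apply]; field_simp; ring

lemma formula (ν : ℕ) : ∃ a b c d : ℝ, ∀ y ∈ Set.Ioi (0:ℝ),
    iteratedDeriv ν hS y =
      y ^ ((1:ℝ)/2 - ν) * (a * Real.sin (Real.log y) + b * Real.cos (Real.log y)) ∧
    iteratedDeriv ν hC y =
      y ^ ((1:ℝ)/2 - ν) * (c * Real.sin (Real.log y) + d * Real.cos (Real.log y)) := by
  induction ν with
  | zero =>
    refine ⟨1, 0, 0, 1, fun y hy => ?_⟩
    have hy' : (0:ℝ) < y := hy
    simp [hS, hC, hy', Real.sqrt_eq_rpow]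
  | succ n ih =>
    obtain ⟨a, b, c, d, h⟩ := ih
    set p : ℝ := (1:ℝ)/2 - n with hp
    refine ⟨p*a - b, a + p*b, p*c - d, c + p*d, fun y hy => ?_⟩
    have hy' : (0:ℝ) < y := hy
    have hmem : Set.Ioi (0:ℝ) ∈ 𝓝 y := Ioi_mem_nhds hy'
    have hexp : (1:ℝ)/2 - (n+1 : ℕ) = p - 1 := by push_cast [hp]; ring
    constructor
    · have heq : iteratedDeriv n hS =ᶠ[𝓝 y]
          (fun y : ℝ => y ^ p * (a * Real.sin (Real.log y) + b * Real.cos (Real.log y))) := by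
        filter_upwards [hmem] with z hz using (h z hz).1
      rw [iteratedDeriv_succ, heq.deriv_eq, (key p a b hy').deriv, hexp]
    · have heq : iteratedDeriv n hC =ᶠ[𝓝 y]
          (fun y : ℝ => y ^ p * (c * Real.sin (Real.log y) + d * Real.cos (Real.log y))) := by
        filter_upwards [hmem] with z hz using (h z hz).2
      rw [iteratedDeriv_succ, heq.deriv_eq, (key p c d hy').deriv, hexp]

lemma smoothAux (f : ℝ → ℝ) (hf : ContDiff ℝ (⊤ : ℕ∞) f) :
    ContDiffOn ℝ (⊤ : ℕ∞) (fun y => if 0 < y then Real.sqrt y * f (Real.log y) else 0)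
      (Set.Ioi (0:ℝ)) := by
  have : ContDiffOn ℝ (⊤ : ℕ∞) (fun y => Real.sqrt y * f (Real.log y)) (Set.Ioi (0:ℝ)) := by
    intro x hx
    have hx0 : x ≠ 0 := (LT.lt.ne' hx)
    exact ((Real.contDiffAt_sqrt hx0).mul
      ((hf.contDiffAt.comp x (Real.contDiffAt_log.mpr hx0)))).contDiffWithinAt
  exact this.congr (fun x hx => by simp [Set.mem_Ioi.mp hx])

/-- The functions `h_s` and `h_c` are smooth on `(0,∞)` and, for every
`ν ∈ ℕ`, the functions `y ↦ y^(ν-1/2) h_s^(ν)(y)` and `y ↦ y^(ν-1/2) h_c^(ν)(y)` remain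
bounded as `y ↓ 0`; in particular they are bounded on `(0,1]`. -/
theorem stmt17 :
    ContDiffOn ℝ (⊤ : ℕ∞) hS (Set.Ioi (0:ℝ)) ∧
    ContDiffOn ℝ (⊤ : ℕ∞) hC (Set.Ioi (0:ℝ)) ∧
    ∀ ν : ℕ, ∃ C : ℝ, ∀ y ∈ Set.Ioc (0:ℝ) 1,
      |y ^ ((ν : ℝ) - 1/2) * iteratedDeriv ν hS y| ≤ C ∧
      |y ^ ((ν : ℝ) - 1/2) * iteratedDeriv ν hC y| ≤ C := by
  refine ⟨smoothAux _ Real.contDiff_sin, smoothAux _ Real.contDiff_cos, fun ν => ?_⟩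
  obtain ⟨a, b, c, d, h⟩ := formula ν
  refine ⟨max (|a| + |b|) (|c| + |d|), fun y hy => ?_⟩
  have hy' : (0:ℝ) < y := hy.1
  have hpow : y ^ ((ν:ℝ) - 1/2) * y ^ ((1:ℝ)/2 - ν) = 1 := by
    rw [← Real.rpow_add hy']
    norm_num
  have hb : ∀ u v : ℝ, |u * Real.sin (Real.log y) + v * Real.cos (Real.log y)| ≤ |u| + |v| := by
    intro u v
    calc |u * Real.sin (Real.log y) + v * Real.cos (Real.log y)|
        ≤ |u * Real.sin (Real.log y)| + |v * Real.cos (Real.log y)| := abs_add_le _ _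
      _ ≤ |u| * 1 + |v| * 1 := by
          rw [abs_mul, abs_mul]
          gcongr
          exacts [Real.abs_sin_le_one _, Real.abs_cos_le_one _]
      _ = |u| + |v| := by ring
  obtain ⟨h1, h2⟩ := h y hy'
  constructor
  · rw [h1, ← mul_assoc, hpow, one_mul]
    exact le_trans (hb a b) (le_max_left _ _)
  · rw [h2, ← mul_assoc, hpow, one_mul]
    exact le_trans (hb c d) (le_max_right _ _)
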